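/- Every admissible algebra N over a field F of characteristic zero with nil-index ν(N) ≤ 3 admits a grading, i.e. a vector space decomposition N = ⊕_{k∈ℤ⁺} N_k with N_j N_k ⊆ N_{j+k} for all j,k > 0. -/

import Mathlib

/-- `pw F N k` is the characteristic ideal `N^k`. -/
def pw (F N : Type*) [Field F] [NonUnitalNonAssocRing N] [Module F N] : ℕ → Submodule F N
  | 0 => ⊤
  | 1 => ⊤
  | (k+2) => Submodule.span F {z : N | ∃ x : N, ∃ y ∈ pw F N (k+1), z = x * y}

/-- The annihilator `Ann(N) = {x | x·N = 0}` of a commutative algebra `N`. -/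
def annSub (F N : Type*) [Field F] [NonUnitalCommRing N] [Module F N]
    [SMulCommClass F N N] [IsScalarTower F N N] : Submodule F N where
  carrier := {x | ∀ y : N, x * y = 0}
  add_mem' := by intro a b ha hb y; simp [add_mul, ha y, hb y]
  zero_mem' := by intro y; simp
  smul_mem' := by intro c x hx y; rw [smul_mul_assoc, hx y, smul_zero]

open Submodule LinearMap Module

section Aux

/-- surjectivity onto the dual from a separating pairing -/
lemma aux_dual_surj {F V D : Type*} [Field F] [AddCommGroup V] [Module F V]
    [AddCommGroup D] [Module F D] [FiniteDimensional F V]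
    (θ : D →ₗ[F] Module.Dual F V)
    (h : ∀ v : V, (∀ d : D, θ d v = 0) → v = 0) :
    LinearMap.range θ = ⊤ := by
  have h1 : (LinearMap.range θ).dualCoannihilator = ⊥ := by
    rw [eq_bot_iff]
    intro v hv
    rw [Submodule.mem_dualCoannihilator] at hv
    exact h v fun d => hv (θ d) (LinearMap.mem_range_self θ d)
  have := congrArg Submodule.dualAnnihilator h1
  rwa [Subspace.dualCoannihilator_dualAnnihilator_eq, Submodule.dualAnnihilator_bot] at this

end Aux
set_option maxHeartbeats 1000000 in
theorem stmt16 {F N : Type*} [Field F] [CharZero F] [NonUnitalCommRing N] [Module F N]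
    [SMulCommClass F N N] [IsScalarTower F N N] [FiniteDimensional F N]
    (hAnn : Module.finrank F (annSub F N) = 1)
    (h4 : pw F N 4 = ⊥) :
    ∃ G : ℕ → Submodule F N,
      G 0 = ⊥ ∧ iSup G = ⊤ ∧ iSupIndep G ∧
      ∀ j k : ℕ, 0 < j → 0 < k → ∀ x ∈ G j, ∀ y ∈ G k, x * y ∈ G (j + k) := by
  classical
  -- the annihilator is spanned by a single nonzero vector e
  obtain ⟨e₀, he₀, hgen⟩ := finrank_eq_one_iff'.mp hAnn
  set e : N := (e₀ : N) with he_def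
  have he0 : e ≠ 0 := fun h => he₀ (Subtype.ext h)
  have heAnn : ∀ y : N, e * y = 0 := e₀.2
  have hAnnle : annSub F N ≤ Submodule.span F {e} := by
    intro a ha
    obtain ⟨c, hc⟩ := hgen ⟨a, ha⟩
    have : c • e = a := congrArg Subtype.val hc
    rw [← this]
    exact Submodule.smul_mem _ _ (Submodule.mem_span_singleton_self e)
  -- basic facts about powers
  have hmem2 : ∀ x y : N, x * y ∈ pw F N 2 := fun x y => Submodule.subset_span ⟨x, y, trivial, rfl⟩
  have hmem3 : ∀ x : N, ∀ y ∈ pw F N 2, x * y ∈ pw F N 3 :=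
    fun x y hy => Submodule.subset_span ⟨x, y, hy, rfl⟩
  have hmem4 : ∀ x : N, ∀ y ∈ pw F N 3, x * y ∈ pw F N 4 :=
    fun x y hy => Submodule.subset_span ⟨x, y, hy, rfl⟩
  have hP3ann : pw F N 3 ≤ annSub F N := by
    intro u hu y
    have : y * u ∈ pw F N 4 := hmem4 y u hu
    rw [h4, Submodule.mem_bot] at this
    rw [mul_comm]; exact this
  have hP3e : pw F N 3 ≤ Submodule.span F {e} := le_trans hP3ann hAnnle
  have hP2P2 : ∀ x ∈ pw F N 2, ∀ y ∈ pw F N 2, x * y = 0 := by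
    intro x hx y hy
    have hker : pw F N 2 ≤ LinearMap.ker (LinearMap.mul F N x) := by
      rw [show pw F N 2 = Submodule.span F {z : N | ∃ a : N, ∃ b ∈ pw F N 1, z = a * b} from rfl,
        Submodule.span_le]
      rintro z ⟨a, b, -, rfl⟩
      have hxa : x * a ∈ pw F N 3 := by rw [mul_comm]; exact hmem3 a x hx
      simp only [SetLike.mem_coe, LinearMap.mem_ker, LinearMap.mul_apply_apply]
      rw [← mul_assoc]
      exact hP3ann hxa b
    simpa using hker hy
  -- the linear functional Λ with Λ e = 1, and vanishing on a complement
  obtain ⟨W, hW⟩ := Submodule.exists_isCompl (Submodule.span F {e})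
  set eqv := LinearEquiv.toSpanNonzeroSingleton F N e he0 with heqv
  set Λ : N →ₗ[F] F :=
    (eqv.symm.toLinearMap) ∘ₗ ((Submodule.span F {e}).linearProjOfIsCompl W hW) with hΛdef
  have hΛspan : ∀ x ∈ Submodule.span F {e}, Λ x • e = x := by
    intro x hx
    have h1 : ((Submodule.span F {e}).linearProjOfIsCompl W hW) x = ⟨x, hx⟩ := by
      have := Submodule.linearProjOfIsCompl_apply_left hW ⟨x, hx⟩
      exact this
    have h2 : Λ x = eqv.symm ⟨x, hx⟩ := by
      simp only [hΛdef, LinearMap.coe_comp, Function.comp_apply, h1, LinearEquiv.coe_coe]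
    have h3 : eqv (eqv.symm ⟨x, hx⟩) = ⟨x, hx⟩ := eqv.apply_symm_apply _
    have h4 : (eqv (eqv.symm ⟨x, hx⟩) : N) = (eqv.symm ⟨x, hx⟩) • e := rfl
    rw [h2, ← h4, h3]
  have hΛe : Λ e = 1 := by
    have h1 := hΛspan e (Submodule.mem_span_singleton_self e)
    have h2 : (Λ e) • e = (1 : F) • e := by rw [h1, one_smul]
    exact smul_left_injective F he0 h2
  -- the bilinear form B x y = Λ (x * y)
  set B : N →ₗ[F] N →ₗ[F] F := (LinearMap.mul F N).compr₂ Λ with hBdef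
  have hB : ∀ x y : N, B x y = Λ (x * y) := fun x y => rfl
  -- key nondegeneracy
  have step : ∀ k : ℕ,
      (∀ z ∈ pw F N (k+2), (∀ y, Λ (z*y) = 0) → Λ z = 0 → z = 0) →
      ∀ x ∈ pw F N (k+1), (∀ y, Λ (x*y) = 0) → Λ x = 0 → x = 0 := by
    intro k ih x hx hxy hΛx
    by_cases hx0 : ∀ y : N, x * y = 0
    · have hxe : x ∈ Submodule.span F {e} := hAnnle hx0
      have := hΛspan x hxe
      rw [hΛx, zero_smul] at this
      exact this.symm
    · push_neg at hx0
      obtain ⟨y, hy⟩ := hx0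
      refine absurd (ih (x*y) ?_ ?_ ?_) hy
      · rw [mul_comm]; exact Submodule.subset_span ⟨y, x, hx, rfl⟩
      · intro y'; rw [mul_assoc]; exact hxy _
      · exact hxy y
  have hkey : ∀ x : N, (∀ y, Λ (x*y) = 0) → Λ x = 0 → x = 0 := by
    have base : ∀ z ∈ pw F N 4, (∀ y, Λ (z*y) = 0) → Λ z = 0 → z = 0 := by
      intro z hz _ _; rw [h4, Submodule.mem_bot] at hz; exact hz
    exact fun x h1 h2 => step 0 (step 1 (step 2 base)) x trivial h1 h2
  -- the quotient space M = N / span {e}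
  set E : Submodule F N := Submodule.span F {e} with hEdef
  set π : N →ₗ[F] (N ⧸ E) := E.mkQ with hπdef
  have hπsurj : Function.Surjective π := Submodule.mkQ_surjective E
  have hπ0 : ∀ x : N, π x = 0 ↔ x ∈ E := fun x => Submodule.Quotient.mk_eq_zero E
  -- descend B to the quotient
  have hBe1 : E ≤ LinearMap.ker B := by
    rw [hEdef, Submodule.span_le]
    rintro z hz
    simp only [Set.mem_singleton_iff] at hz
    subst hz
    simp only [SetLike.mem_coe, LinearMap.mem_ker]
    ext y
    simp only [hB, heAnn y, map_zero, LinearMap.zero_apply]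
  set C : (N ⧸ E) →ₗ[F] N →ₗ[F] F := E.liftQ B hBe1 with hCdef
  have hC : ∀ x y : N, C (π x) y = Λ (x * y) := fun x y => rfl
  have hCe : E ≤ LinearMap.ker C.flip := by
    intro z hz
    obtain ⟨c, rfl⟩ := Submodule.mem_span_singleton.mp hz
    simp only [LinearMap.mem_ker, map_smul]
    suffices h : C.flip e = 0 by rw [h, smul_zero]
    ext m
    show C (π m) e = 0
    rw [hC, mul_comm, heAnn m, map_zero]
  set Bbar : (N ⧸ E) →ₗ[F] (N ⧸ E) →ₗ[F] F := (E.liftQ C.flip hCe).flip with hBbardef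
  have hBbar : ∀ x y : N, Bbar (π x) (π y) = Λ (x * y) := fun x y => rfl
  have hflip : ∀ m n : N ⧸ E, Bbar m n = Bbar n m := by
    intro m n
    obtain ⟨x, rfl⟩ := hπsurj m
    obtain ⟨y, rfl⟩ := hπsurj n
    rw [hBbar, hBbar, mul_comm]
  have hrefl : LinearMap.BilinForm.IsRefl Bbar := fun m n h => by rw [hflip]; exact h
  have hnondeg : LinearMap.BilinForm.Nondegenerate Bbar := by
    refine (LinearMap.IsRefl.nondegenerate_iff_separatingLeft hrefl).mpr ?_
    intro m hm
    obtain ⟨x, rfl⟩ := hπsurj m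
    rw [hπ0]
    have hx' : ∀ y : N, Λ ((x - Λ x • e) * y) = 0 := by
      intro y
      have h1 : Bbar (π x) (π y) = 0 := hm (π y)
      rw [hBbar] at h1
      rw [sub_mul, smul_mul_assoc, heAnn y, smul_zero, sub_zero]
      exact h1
    have hΛx' : Λ (x - Λ x • e) = 0 := by
      simp [map_sub, map_smul, hΛe, smul_eq_mul]
    have := hkey _ hx' hΛx'
    have hx : x = Λ x • e := by
      have := sub_eq_zero.mp this
      exact this
    rw [hx]
    exact Submodule.smul_mem _ _ (Submodule.mem_span_singleton_self e)
  -- orthogonal complement machinery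
  set orth : Submodule F (N ⧸ E) → Submodule F (N ⧸ E) :=
    fun S => LinearMap.BilinForm.orthogonal Bbar S with horthdef
  have horth_mem : ∀ (S : Submodule F (N ⧸ E)) (m : N ⧸ E),
      m ∈ orth S ↔ ∀ n ∈ S, Bbar n m = 0 := fun S m => Iff.rfl
  have hoo : ∀ S : Submodule F (N ⧸ E), orth (orth S) = S :=
    fun S => LinearMap.BilinForm.orthogonal_orthogonal hnondeg hrefl S
  have horth_sup : ∀ S S' : Submodule F (N ⧸ E), orth (S ⊔ S') = orth S ⊓ orth S' := by
    intro S S'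
    apply le_antisymm
    · exact le_inf (LinearMap.BilinForm.orthogonal_le le_sup_left)
        (LinearMap.BilinForm.orthogonal_le le_sup_right)
    · intro m hm
      rw [horth_mem]
      intro n hn
      obtain ⟨u, hu, u', hu', rfl⟩ := Submodule.mem_sup.mp hn
      rw [map_add, LinearMap.add_apply, (horth_mem S m).mp hm.1 u hu,
        (horth_mem S' m).mp hm.2 u' hu', add_zero]
  -- Q2 = image of N² in the quotient, Tb = its orthogonal
  set Q2 : Submodule F (N ⧸ E) := (pw F N 2).map π with hQ2def
  set Tb : Submodule F (N ⧸ E) := orth Q2 with hTbdef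
  have hQ2T : Q2 ≤ Tb := by
    rintro m ⟨u, hu, rfl⟩
    rw [horth_mem]
    rintro n ⟨u', hu', rfl⟩
    rw [hBbar, hP2P2 u' hu' u hu, map_zero]
  have hTQ2 : orth Tb = Q2 := by rw [hTbdef, hoo]
  -- membership in Tb is annihilation of N²
  have hTmem : ∀ x : N, π x ∈ Tb → ∀ u ∈ pw F N 2, x * u = 0 := by
    intro x hx u hu
    have h1 : Bbar (π u) (π x) = 0 := (horth_mem Q2 (π x)).mp hx (π u) ⟨u, hu, rfl⟩
    rw [hBbar] at h1
    have h2 : x * u ∈ E := hP3e (hmem3 x u hu)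
    have := hΛspan _ h2
    rw [show Λ (x * u) = 0 by rw [mul_comm]; exact h1, zero_smul] at this
    exact this.symm
  have hTmul : ∀ x y : N, π x ∈ Tb → x * y ∈ E := by
    intro x y hx
    refine hAnnle (fun z => ?_)
    rw [mul_assoc]
    exact hTmem x hx _ (hmem2 y z)
  -- Xb : a complement of Q2 inside Tb
  obtain ⟨X', hX'⟩ := Submodule.exists_isCompl (Q2.comap Tb.subtype)
  set Xb : Submodule F (N ⧸ E) := X'.map Tb.subtype with hXbdef
  have hXbT : Xb ≤ Tb := Submodule.map_subtype_le Tb X'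
  have hXbQ2 : Xb ⊓ Q2 = ⊥ := by
    rw [eq_bot_iff]
    rintro m ⟨hmX, hmQ⟩
    obtain ⟨⟨n, hnT⟩, hn', rfl⟩ := hmX
    have : (⟨n, hnT⟩ : Tb) ∈ Q2.comap Tb.subtype ⊓ X' := ⟨hmQ, hn'⟩
    rw [hX'.inf_eq_bot] at this
    simp only [Submodule.mem_bot] at this
    rw [this]
    simp
  have hXbsup : Xb ⊔ Q2 = Tb := by
    have h2 : (Q2.comap Tb.subtype).map Tb.subtype = Q2 := by
      rw [Submodule.map_comap_subtype]
      exact inf_eq_right.mpr hQ2T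
    rw [hXbdef, ← h2, ← Submodule.map_sup, sup_comm, hX'.sup_eq_top, Submodule.map_top,
      Submodule.range_subtype]
  -- Xperp and the complement Vb
  set Xperp : Submodule F (N ⧸ E) := orth Xb with hXperpdef
  have hXoo : orth Xperp = Xb := by rw [hXperpdef, hoo]
  have hcodis : Xperp ⊔ Tb = ⊤ := by
    have h1 : orth (Xperp ⊔ Tb) = ⊥ := by
      rw [horth_sup, hXoo, hTQ2, hXbQ2]
    have := congrArg orth h1
    rw [hoo] at this
    rw [this, horthdef]
    exact LinearMap.BilinForm.orthogonal_bot
  obtain ⟨V', hV'⟩ := Submodule.exists_isCompl ((Tb ⊓ Xperp).comap Xperp.subtype)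
  set Vb : Submodule F (N ⧸ E) := V'.map Xperp.subtype with hVbdef
  have hVbX : Vb ≤ Xperp := Submodule.map_subtype_le Xperp V'
  have hVbT : Vb ⊓ Tb = ⊥ := by
    rw [eq_bot_iff]
    rintro m ⟨hmV, hmT⟩
    obtain ⟨⟨n, hnX⟩, hn', rfl⟩ := hmV
    have : (⟨n, hnX⟩ : Xperp) ∈ (Tb ⊓ Xperp).comap Xperp.subtype ⊓ V' := ⟨⟨hmT, hnX⟩, hn'⟩
    rw [hV'.inf_eq_bot] at this
    simp only [Submodule.mem_bot] at this
    rw [this]; simp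
  have hVbTtop : Vb ⊔ Tb = ⊤ := by
    have h2 : ((Tb ⊓ Xperp).comap Xperp.subtype).map Xperp.subtype = Tb ⊓ Xperp := by
      rw [Submodule.map_comap_subtype]
      exact inf_eq_right.mpr inf_le_right
    have h3 : Vb ⊔ (Tb ⊓ Xperp) = Xperp := by
      rw [hVbdef, ← h2, ← Submodule.map_sup, sup_comm, hV'.sup_eq_top, Submodule.map_top,
        Submodule.range_subtype]
    have h4 : (Vb ⊔ (Tb ⊓ Xperp)) ⊔ Tb = Vb ⊔ Tb := by
      have h5 : (Tb ⊓ Xperp) ⊔ Tb = Tb := sup_eq_right.mpr inf_le_left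
      rw [sup_assoc, h5]
    rw [← h4, h3]
    exact hcodis
  -- Q2 is orthogonal to Xb
  have hQ2Xperp : Q2 ≤ Xperp := by
    intro m hm
    rw [hXperpdef, horth_mem]
    intro n hn
    exact hrefl m n ((horth_mem Q2 n).mp (hXbT hn) m hm)
  -- the pairing θ : Q2 → Dual Vb is surjective
  set θ : Q2 →ₗ[F] Module.Dual F Vb := (Bbar.domRestrict₁₂ Vb Q2).flip with hθdef
  have hθ : ∀ (q : Q2) (v : Vb), θ q v = Bbar (v : N ⧸ E) (q : N ⧸ E) := fun q v => rfl
  have hθsurj : LinearMap.range θ = ⊤ := by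
    apply aux_dual_surj
    intro v hv
    have hvT : (v : N ⧸ E) ∈ Tb := by
      rw [hTbdef, horth_mem]
      intro n hn
      have := hv ⟨n, hn⟩
      rw [hflip n (v : N ⧸ E)]
      exact this
    have : (v : N ⧸ E) ∈ Vb ⊓ Tb := ⟨v.2, hvT⟩
    rw [hVbT, Submodule.mem_bot] at this
    exact Subtype.ext this
  obtain ⟨ρ, hρ⟩ := θ.exists_rightInverse_of_surjective hθsurj
  have hρ' : ∀ f : Module.Dual F Vb, θ (ρ f) = f := fun f => LinearMap.congr_fun hρ f
  -- a linear section σ of π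
  set σ : (N ⧸ E) →ₗ[F] N := W.subtype ∘ₗ (Submodule.quotientEquivOfIsCompl E W hW).toLinearMap
    with hσdef
  have hσ : ∀ m : N ⧸ E, π (σ m) = m := by
    intro m
    exact Submodule.mk_quotientEquivOfIsCompl_apply hW m
  -- the twisting map w and the twisted lift φ of Vb
  set β : Vb →ₗ[F] Vb →ₗ[F] F := B.compl₁₂ (σ ∘ₗ Vb.subtype) (σ ∘ₗ Vb.subtype) with hβdef
  have hβ : ∀ v v' : Vb, β v v' = Λ (σ (v : N ⧸ E) * σ (v' : N ⧸ E)) := fun v v' => rfl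
  have hβsymm : ∀ v v' : Vb, β v v' = β v' v := by
    intro v v'; rw [hβ, hβ, mul_comm]
  set w : Vb →ₗ[F] Q2 := ρ ∘ₗ ((-(1/2 : F)) • β) with hwdef
  have hw : ∀ v v' : Vb, Bbar (v' : N ⧸ E) ((w v : Q2) : N ⧸ E) = -(1/2 : F) * β v v' := by
    intro v v'
    have h1 : θ (w v) = (-(1/2 : F)) • β v := by
      have : w v = ρ ((-(1/2 : F)) • β v) := by
        simp only [hwdef, LinearMap.coe_comp, Function.comp_apply, LinearMap.smul_apply]
      rw [this, hρ']
    have h2 := LinearMap.congr_fun h1 v'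
    rw [hθ] at h2
    simpa using h2
  set φ : Vb →ₗ[F] N := (σ ∘ₗ Vb.subtype) + (σ ∘ₗ Q2.subtype ∘ₗ w) with hφdef
  have hφπ : ∀ v : Vb, π (φ v) = (v : N ⧸ E) + ((w v : Q2) : N ⧸ E) := by
    intro v
    simp only [hφdef, LinearMap.add_apply, map_add, LinearMap.coe_comp, Function.comp_apply,
      Submodule.coe_subtype, hσ]
  have hQ2rep : ∀ q : Q2, ∃ u ∈ pw F N 2, π u = (q : N ⧸ E) := by
    rintro ⟨q, hq⟩
    obtain ⟨u, hu, hu'⟩ := hq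
    exact ⟨u, hu, hu'⟩
  have hφΛ : ∀ v v' : Vb, Λ (φ v * φ v') = 0 := by
    intro v v'
    have h0 : Λ (φ v * φ v') = Bbar (π (φ v)) (π (φ v')) := (hBbar _ _).symm
    rw [h0, hφπ, hφπ]
    simp only [map_add, LinearMap.add_apply]
    have e1 : Bbar (v : N ⧸ E) (v' : N ⧸ E) = β v v' := by
      rw [← hσ (v : N ⧸ E), ← hσ (v' : N ⧸ E), hBbar]
      exact (hβ v v').symm
    have e2 : Bbar (v : N ⧸ E) ((w v' : Q2) : N ⧸ E) = -(1/2 : F) * β v v' := by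
      rw [hw v' v, hβsymm v' v]
    have e3 : Bbar ((w v : Q2) : N ⧸ E) (v' : N ⧸ E) = -(1/2 : F) * β v v' := by
      rw [hflip, hw v v']
    have e4 : Bbar ((w v : Q2) : N ⧸ E) ((w v' : Q2) : N ⧸ E) = 0 := by
      obtain ⟨u, hu, hu'⟩ := hQ2rep (w v)
      obtain ⟨u', hu2, hu2'⟩ := hQ2rep (w v')
      rw [← hu', ← hu2', hBbar, hP2P2 u hu u' hu2, map_zero]
    rw [e1, e2, e3, e4]
    ring
  -- the four graded pieces in N
  set G2 : Submodule F N := LinearMap.range φ with hG2def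
  set G3 : Submodule F N := Xb.map σ with hG3def
  set P : Submodule F N := pw F N 2 ⊔ E with hPdef
  set G4 : Submodule F N := P ⊓ LinearMap.ker Λ with hG4def
  have hPdecomp : ∀ u ∈ P, ∃ p ∈ pw F N 2, ∃ c : F, u = p + c • e := by
    intro u hu
    obtain ⟨p, hp, z, hz, rfl⟩ := Submodule.mem_sup.mp hu
    obtain ⟨c, rfl⟩ := Submodule.mem_span_singleton.mp hz
    exact ⟨p, hp, c, rfl⟩
  have hEmul : ∀ x ∈ E, ∀ y : N, x * y = 0 := by
    intro x hx y
    obtain ⟨c, rfl⟩ := Submodule.mem_span_singleton.mp hx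
    rw [smul_mul_assoc, heAnn y, smul_zero]
  -- membership facts under π
  have hG2π : ∀ x ∈ G2, π x ∈ Xperp := by
    rintro x ⟨v, rfl⟩
    rw [hφπ]
    exact Submodule.add_mem _ (hVbX v.2) (hQ2Xperp (w v).2)
  have hG2inj : ∀ x ∈ G2, π x = 0 → x = 0 := by
    rintro x ⟨v, rfl⟩ hx
    rw [hφπ] at hx
    have hv : (v : N ⧸ E) ∈ Tb := by
      have : (v : N ⧸ E) = -((w v : Q2) : N ⧸ E) := by
        rw [eq_neg_iff_add_eq_zero]; exact hx
      rw [this]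
      exact Submodule.neg_mem _ (hQ2T (w v).2)
    have : (v : N ⧸ E) ∈ Vb ⊓ Tb := ⟨v.2, hv⟩
    rw [hVbT, Submodule.mem_bot] at this
    have hv0 : v = 0 := Subtype.ext this
    rw [hv0, map_zero]
  have hG3π : ∀ x ∈ G3, π x ∈ Xb := by
    rintro x ⟨m, hm, rfl⟩
    rw [hσ]; exact hm
  have hG3inj : ∀ x ∈ G3, π x = 0 → x = 0 := by
    rintro x ⟨m, hm, rfl⟩ hx
    rw [hσ] at hx
    rw [hx, map_zero]
  have hG4π : ∀ u ∈ G4, π u ∈ Q2 := by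
    rintro u ⟨huP, _⟩
    obtain ⟨p, hp, c, rfl⟩ := hPdecomp u huP
    have : π (c • e) = 0 := by
      rw [hπ0]; exact Submodule.smul_mem _ _ (Submodule.mem_span_singleton_self e)
    rw [map_add, this, add_zero]
    exact ⟨p, hp, rfl⟩
  have hG4inj : ∀ u ∈ G4, π u = 0 → u = 0 := by
    rintro u ⟨_, huΛ⟩ hu
    rw [hπ0] at hu
    have := hΛspan u hu
    rw [LinearMap.mem_ker.mp huΛ, zero_smul] at this
    exact this.symm
  have hG4surj : ∀ q ∈ Q2, ∃ u ∈ G4, π u = q := by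
    rintro q ⟨p, hp, rfl⟩
    refine ⟨p - Λ p • e, ⟨?_, ?_⟩, ?_⟩
    · exact Submodule.sub_mem _ (Submodule.mem_sup_left hp)
        (Submodule.mem_sup_right (Submodule.smul_mem _ _ (Submodule.mem_span_singleton_self e)))
    · show p - Λ p • e ∈ LinearMap.ker Λ
      rw [LinearMap.mem_ker, map_sub, map_smul, hΛe, smul_eq_mul, mul_one, sub_self]
    · rw [map_sub, sub_eq_self, hπ0]
      exact Submodule.smul_mem _ _ (Submodule.mem_span_singleton_self e)
  -- multiplication facts
  have hmul22 : ∀ x ∈ G2, ∀ y ∈ G2, x * y ∈ G4 := by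
    rintro x ⟨v, rfl⟩ y ⟨v', rfl⟩
    exact ⟨Submodule.mem_sup_left (hmem2 _ _), LinearMap.mem_ker.mpr (hφΛ v v')⟩
  have hmul23 : ∀ x ∈ G2, ∀ y ∈ G3, x * y = 0 := by
    rintro x hx y hy
    have hyT : π y ∈ Tb := hXbT (hG3π y hy)
    have h1 : y * x ∈ E := hTmul y x hyT
    have h2 : Λ (y * x) = 0 := by
      have := (horth_mem Xb (π x)).mp (hG2π x hx) (π y) (hG3π y hy)
      rw [hBbar] at this
      exact this
    have := hΛspan _ h1
    rw [h2, zero_smul] at this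
    rw [mul_comm]
    exact this.symm
  have hmulT4 : ∀ x : N, π x ∈ Tb → ∀ u ∈ P, x * u = 0 := by
    intro x hx u hu
    obtain ⟨p, hp, c, rfl⟩ := hPdecomp u hu
    rw [mul_add, hTmem x hx p hp, mul_comm, hEmul (c • e)
      (Submodule.smul_mem _ _ (Submodule.mem_span_singleton_self e)) x, add_zero]
  have hmul24 : ∀ x : N, ∀ u ∈ G4, x * u ∈ E := by
    rintro x u ⟨huP, _⟩
    obtain ⟨p, hp, c, rfl⟩ := hPdecomp u huP
    rw [mul_add, mul_comm x (c • e), hEmul (c • e)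
      (Submodule.smul_mem _ _ (Submodule.mem_span_singleton_self e)) x, add_zero]
    exact hP3e (hmem3 x p hp)
  have hmul33 : ∀ x ∈ G3, ∀ y : N, x * y ∈ E := by
    rintro x hx y
    exact hTmul x y (hXbT (hG3π x hx))
  have hmul34 : ∀ x ∈ G3, ∀ u ∈ G4, x * u = 0 := by
    rintro x hx u ⟨huP, _⟩
    exact hmulT4 x (hXbT (hG3π x hx)) u huP
  have hmul44 : ∀ u ∈ G4, ∀ u' ∈ G4, u * u' = 0 := by
    rintro u ⟨huP, _⟩ u' ⟨huP', _⟩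
    obtain ⟨p, hp, c, rfl⟩ := hPdecomp u huP
    obtain ⟨p', hp', c', rfl⟩ := hPdecomp u' huP'
    have he' : ∀ z : N, (c • e) * z = 0 := fun z => hEmul (c • e)
      (Submodule.smul_mem _ _ (Submodule.mem_span_singleton_self e)) z
    have he'' : ∀ z : N, z * (c' • e) = 0 := fun z => by
      rw [mul_comm]; exact hEmul (c' • e)
        (Submodule.smul_mem _ _ (Submodule.mem_span_singleton_self e)) z
    rw [add_mul, mul_add, mul_add, hP2P2 p hp p' hp', he' p', he'' p, he'' (c • e)]
    simp
  -- the image of G2 in the quotient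
  set Vb' : Submodule F (N ⧸ E) := G2.map π with hVb'def
  have hVb'mem : ∀ m ∈ Vb', ∃ x ∈ G2, π x = m := by
    rintro m ⟨x, hx, rfl⟩; exact ⟨x, hx, rfl⟩
  have hVb'Tb : ∀ m ∈ Vb', m ∈ Tb → m = 0 := by
    rintro m ⟨x, ⟨v, rfl⟩, rfl⟩ hmT
    rw [hφπ] at hmT ⊢
    have hv : (v : N ⧸ E) ∈ Tb := by
      have h1 : (v : N ⧸ E) = ((v : N ⧸ E) + ((w v : Q2) : N ⧸ E)) - ((w v : Q2) : N ⧸ E) := by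
        abel
      rw [h1]
      exact Submodule.sub_mem _ hmT (hQ2T (w v).2)
    have : (v : N ⧸ E) ∈ Vb ⊓ Tb := ⟨v.2, hv⟩
    rw [hVbT, Submodule.mem_bot] at this
    have hv0 : v = 0 := Subtype.ext this
    rw [hv0]
    simp
  have hXb_VQ : ∀ m ∈ Xb, m ∈ Vb' ⊔ Q2 → m = 0 := by
    intro m hm hm'
    obtain ⟨a, ha, q, hq, rfl⟩ := Submodule.mem_sup.mp hm'
    have haT : a ∈ Tb := by
      have h1 : a = (a + q) - q := by abel
      rw [h1]
      exact Submodule.sub_mem _ (hXbT hm) (hQ2T hq)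
    have ha0 : a = 0 := hVb'Tb a ha haT
    rw [ha0, zero_add] at hm ⊢
    have : q ∈ Xb ⊓ Q2 := ⟨hm, hq⟩
    rw [hXbQ2, Submodule.mem_bot] at this
    exact this
  have hQ2_VX : ∀ m ∈ Q2, m ∈ Vb' ⊔ Xb → m = 0 := by
    intro m hm hm'
    obtain ⟨a, ha, q, hq, rfl⟩ := Submodule.mem_sup.mp hm'
    have haT : a ∈ Tb := by
      have h1 : a = (a + q) - q := by abel
      rw [h1]
      exact Submodule.sub_mem _ (hQ2T hm) (hXbT hq)
    have ha0 : a = 0 := hVb'Tb a ha haT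
    rw [ha0, zero_add] at hm ⊢
    have : q ∈ Xb ⊓ Q2 := ⟨hq, hm⟩
    rw [hXbQ2, Submodule.mem_bot] at this
    exact this
  have hMtop : Vb' ⊔ (Xb ⊔ Q2) = ⊤ := by
    rw [hXbsup]
    rw [eq_top_iff, ← hVbTtop]
    apply sup_le
    · intro m hm
      have h1 : (m : N ⧸ E) = π (φ ⟨m, hm⟩) - ((w ⟨m, hm⟩ : Q2) : N ⧸ E) := by
        rw [hφπ]; abel
      rw [h1]
      exact Submodule.sub_mem _ (Submodule.mem_sup_left ⟨φ ⟨m, hm⟩, ⟨⟨m, hm⟩, rfl⟩, rfl⟩)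
        (Submodule.mem_sup_right (hQ2T (w ⟨m, hm⟩).2))
    · exact le_sup_right
  -- the grading
  set G : ℕ → Submodule F N :=
    fun k => if k = 2 then G2 else if k = 3 then G3 else if k = 4 then G4 else
      if k = 6 then E else ⊥ with hGdef
  refine ⟨G, ?_, ?_, ?_, ?_⟩
  · simp [hGdef]
  · -- iSup G = ⊤
    have hStop : G2 ⊔ G3 ⊔ G4 ⊔ E = ⊤ := by
      rw [eq_top_iff]
      intro x _
      have hx : π x ∈ Vb' ⊔ (Xb ⊔ Q2) := by rw [hMtop]; trivial
      obtain ⟨a, ha, bc, hbc, hsum⟩ := Submodule.mem_sup.mp hx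
      obtain ⟨b, hb, c, hc, rfl⟩ := Submodule.mem_sup.mp hbc
      obtain ⟨x2, hx2, hx2'⟩ := hVb'mem a ha
      obtain ⟨x4, hx4, hx4'⟩ := hG4surj c hc
      have hx3 : σ b ∈ G3 := ⟨b, hb, rfl⟩
      have hr : x - x2 - σ b - x4 ∈ E := by
        rw [← hπ0, map_sub, map_sub, map_sub, hx2', hσ, hx4', ← hsum]
        abel
      have hxeq : x = x2 + σ b + x4 + (x - x2 - σ b - x4) := by abel
      rw [hxeq]
      exact Submodule.add_mem _ (Submodule.add_mem _ (Submodule.add_mem _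
        (Submodule.mem_sup_left (Submodule.mem_sup_left (Submodule.mem_sup_left hx2)))
        (Submodule.mem_sup_left (Submodule.mem_sup_left (Submodule.mem_sup_right hx3))))
        (Submodule.mem_sup_left (Submodule.mem_sup_right hx4)))
        (Submodule.mem_sup_right hr)
    rw [eq_top_iff, ← hStop]
    have l2 : G2 ≤ iSup G := by
      have := le_iSup G 2
      simpa [hGdef] using this
    have l3 : G3 ≤ iSup G := by
      have := le_iSup G 3
      simpa [hGdef] using this
    have l4 : G4 ≤ iSup G := by
      have := le_iSup G 4
      simpa [hGdef] using this
    have l6 : E ≤ iSup G := by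
      have := le_iSup G 6
      simpa [hGdef] using this
    exact sup_le (sup_le (sup_le l2 l3) l4) l6
  · -- independence
    intro i
    have hrest : ∀ (S : Submodule F N), (∀ j, j ≠ i → G j ≤ S) →
        (⨆ j, ⨆ (_ : j ≠ i), G j) ≤ S :=
      fun S h => iSup_le fun j => iSup_le fun hj => h j hj
    by_cases hi2 : i = 2
    · subst hi2
      have hle : (⨆ j, ⨆ (_ : j ≠ 2), G j) ≤ G3 ⊔ G4 ⊔ E := by
        apply hrest
        intro j hj
        simp only [hGdef, if_neg hj]
        split_ifs
        · exact le_sup_of_le_left (le_sup_of_le_left le_rfl)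
        · exact le_sup_of_le_left le_sup_right
        · exact le_sup_right
        · exact bot_le
      refine Disjoint.mono_right hle ?_
      rw [disjoint_iff, eq_bot_iff]
      rintro x ⟨hx2, hxR⟩
      have hx2' : x ∈ G2 := by simpa [hGdef] using hx2
      obtain ⟨bc, hbc, d, hd, rfl⟩ := Submodule.mem_sup.mp hxR
      obtain ⟨b, hb, c, hc, rfl⟩ := Submodule.mem_sup.mp hbc
      have hπd : π d = 0 := (hπ0 d).mpr hd
      have hπT : π (b + c + d) ∈ Tb := by
        rw [map_add, map_add, hπd, add_zero]
        exact Submodule.add_mem _ (hXbT (hG3π b hb)) (hQ2T (hG4π c hc))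
      have h0 : π (b + c + d) = 0 :=
        hVb'Tb _ ⟨b + c + d, hx2', rfl⟩ hπT
      rw [Submodule.mem_bot]
      exact hG2inj _ hx2' h0
    · by_cases hi3 : i = 3
      · subst hi3
        have hle : (⨆ j, ⨆ (_ : j ≠ 3), G j) ≤ G2 ⊔ G4 ⊔ E := by
          apply hrest
          intro j hj
          simp only [hGdef, if_neg hj]
          split_ifs
          · exact le_sup_of_le_left (le_sup_of_le_left le_rfl)
          · exact le_sup_of_le_left le_sup_right
          · exact le_sup_right
          · exact bot_le
        refine Disjoint.mono_right hle ?_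
        rw [disjoint_iff, eq_bot_iff]
        rintro x ⟨hx3, hxR⟩
        have hx3' : x ∈ G3 := by simpa [hGdef] using hx3
        obtain ⟨ac, hac, d, hd, rfl⟩ := Submodule.mem_sup.mp hxR
        obtain ⟨a, ha, c, hc, rfl⟩ := Submodule.mem_sup.mp hac
        have hπd : π d = 0 := (hπ0 d).mpr hd
        have hsum : π (a + c + d) ∈ Vb' ⊔ Q2 := by
          rw [map_add, map_add, hπd, add_zero]
          exact Submodule.add_mem _ (Submodule.mem_sup_left ⟨a, ha, rfl⟩)
            (Submodule.mem_sup_right (hG4π c hc))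
        have h0 : π (a + c + d) = 0 := hXb_VQ _ (hG3π _ hx3') hsum
        rw [Submodule.mem_bot]
        exact hG3inj _ hx3' h0
      · by_cases hi4 : i = 4
        · subst hi4
          have hle : (⨆ j, ⨆ (_ : j ≠ 4), G j) ≤ G2 ⊔ G3 ⊔ E := by
            apply hrest
            intro j hj
            simp only [hGdef]
            split_ifs with h1 h2 h3
            · exact le_sup_of_le_left (le_sup_of_le_left le_rfl)
            · exact le_sup_of_le_left le_sup_right
            · exact le_sup_right
            · exact bot_le
          refine Disjoint.mono_right hle ?_
          rw [disjoint_iff, eq_bot_iff]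
          rintro x ⟨hx4, hxR⟩
          have hx4' : x ∈ G4 := by simpa [hGdef] using hx4
          obtain ⟨ab, hab, d, hd, rfl⟩ := Submodule.mem_sup.mp hxR
          obtain ⟨a, ha, b, hb, rfl⟩ := Submodule.mem_sup.mp hab
          have hπd : π d = 0 := (hπ0 d).mpr hd
          have hsum : π (a + b + d) ∈ Vb' ⊔ Xb := by
            rw [map_add, map_add, hπd, add_zero]
            exact Submodule.add_mem _ (Submodule.mem_sup_left ⟨a, ha, rfl⟩)
              (Submodule.mem_sup_right (hG3π b hb))
          have h0 : π (a + b + d) = 0 := hQ2_VX _ (hG4π _ hx4') hsum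
          rw [Submodule.mem_bot]
          exact hG4inj _ hx4' h0
        · by_cases hi6 : i = 6
          · subst hi6
            have hle : (⨆ j, ⨆ (_ : j ≠ 6), G j) ≤ G2 ⊔ G3 ⊔ G4 := by
              apply hrest
              intro j hj
              simp only [hGdef]
              split_ifs with h1 h2 h3
              · exact le_sup_of_le_left (le_sup_of_le_left le_rfl)
              · exact le_sup_of_le_left le_sup_right
              · exact le_sup_right
              · exact bot_le
            refine Disjoint.mono_right hle ?_
            rw [disjoint_iff, eq_bot_iff]
            rintro x ⟨hx6, hxR⟩
            have hx6' : x ∈ E := by simpa [hGdef] using hx6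
            obtain ⟨ab, hab, c, hc, rfl⟩ := Submodule.mem_sup.mp hxR
            obtain ⟨a, ha, b, hb, rfl⟩ := Submodule.mem_sup.mp hab
            have hπ0' : π (a + b + c) = 0 := (hπ0 _).mpr hx6'
            rw [map_add, map_add] at hπ0'
            have hπa : π a ∈ Tb := by
              have h1 : π a = -(π b + π c) := by
                rw [eq_neg_iff_add_eq_zero, ← add_assoc]
                exact hπ0'
              rw [h1]
              exact Submodule.neg_mem _ (Submodule.add_mem _ (hXbT (hG3π b hb))
                (hQ2T (hG4π c hc)))
            have ha0 : π a = 0 := hVb'Tb _ ⟨a, ha, rfl⟩ hπa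
            have ha0' : a = 0 := hG2inj a ha ha0
            rw [ha0, zero_add] at hπ0'
            have hbq : π b ∈ Xb ⊓ Q2 := by
              constructor
              · exact hG3π b hb
              · have h1 : π b = -(π c) := by rwa [← eq_neg_iff_add_eq_zero] at hπ0'
                rw [h1]
                exact Submodule.neg_mem _ (hG4π c hc)
            rw [hXbQ2, Submodule.mem_bot] at hbq
            have hb0 : b = 0 := hG3inj b hb hbq
            rw [hbq, zero_add] at hπ0'
            have hc0 : c = 0 := hG4inj c hc hπ0'
            rw [Submodule.mem_bot, ha0', hb0, hc0]
            simp
          · have : G i = ⊥ := by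
              simp [hGdef, hi2, hi3, hi4, hi6]
            rw [this]
            exact disjoint_bot_left
  · -- multiplication
    intro j k hj hk x hx y hy
    have hcase : ∀ i : ℕ, G i = ⊥ ∨ i = 2 ∨ i = 3 ∨ i = 4 ∨ i = 6 := by
      intro i
      by_cases h2 : i = 2
      · exact Or.inr (Or.inl h2)
      by_cases h3 : i = 3
      · exact Or.inr (Or.inr (Or.inl h3))
      by_cases h4' : i = 4
      · exact Or.inr (Or.inr (Or.inr (Or.inl h4')))
      by_cases h6 : i = 6
      · exact Or.inr (Or.inr (Or.inr (Or.inr h6)))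
      · exact Or.inl (by simp [hGdef, h2, h3, h4', h6])
    have hbotx : ∀ i, G i = ⊥ → ∀ z ∈ G i, ∀ z' : N, z * z' ∈ G (i + k) ∧ z' * z ∈ G (j + i) := by
      intro i hGi z hz z'
      rw [hGi, Submodule.mem_bot] at hz
      subst hz
      constructor
      · rw [zero_mul]; exact Submodule.zero_mem _
      · rw [mul_zero]; exact Submodule.zero_mem _
    rcases hcase j with hj' | hj' | hj' | hj' | hj'
    · exact ((hbotx j hj' x hx y).1)
    all_goals rcases hcase k with hk' | hk' | hk' | hk' | hk'
    all_goals (try (subst hj')); (try (subst hk'))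
    · exact (hbotx k hk' y hy x).2
    · -- 2,2
      have : x * y ∈ G4 := hmul22 x (by simpa [hGdef] using hx) y (by simpa [hGdef] using hy)
      simpa [hGdef] using this
    · -- 2,3
      have : x * y = 0 := hmul23 x (by simpa [hGdef] using hx) y (by simpa [hGdef] using hy)
      rw [this]; exact Submodule.zero_mem _
    · -- 2,4
      have : x * y ∈ E := hmul24 x y (by simpa [hGdef] using hy)
      simpa [hGdef] using this
    · -- 2,6
      have : x * y = 0 := by
        rw [mul_comm]; exact hEmul y (by simpa [hGdef] using hy) x
      rw [this]; exact Submodule.zero_mem _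
    · exact (hbotx k hk' y hy x).2
    · -- 3,2
      have : y * x = 0 := hmul23 y (by simpa [hGdef] using hy) x (by simpa [hGdef] using hx)
      rw [mul_comm, this]; exact Submodule.zero_mem _
    · -- 3,3
      have : x * y ∈ E := hmul33 x (by simpa [hGdef] using hx) y
      simpa [hGdef] using this
    · -- 3,4
      have : x * y = 0 := hmul34 x (by simpa [hGdef] using hx) y (by simpa [hGdef] using hy)
      rw [this]; exact Submodule.zero_mem _
    · -- 3,6
      have : x * y = 0 := by
        rw [mul_comm]; exact hEmul y (by simpa [hGdef] using hy) x
      rw [this]; exact Submodule.zero_mem _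
    · exact (hbotx k hk' y hy x).2
    · -- 4,2
      have : y * x ∈ E := hmul24 y x (by simpa [hGdef] using hx)
      rw [mul_comm]
      simpa [hGdef] using this
    · -- 4,3
      have : y * x = 0 := hmul34 y (by simpa [hGdef] using hy) x (by simpa [hGdef] using hx)
      rw [mul_comm, this]; exact Submodule.zero_mem _
    · -- 4,4
      have : x * y = 0 := hmul44 x (by simpa [hGdef] using hx) y (by simpa [hGdef] using hy)
      rw [this]; exact Submodule.zero_mem _
    · -- 4,6
      have : x * y = 0 := by
        rw [mul_comm]; exact hEmul y (by simpa [hGdef] using hy) x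
      rw [this]; exact Submodule.zero_mem _
    · exact (hbotx k hk' y hy x).2
    · -- 6,2
      have : x * y = 0 := hEmul x (by simpa [hGdef] using hx) y
      rw [this]; exact Submodule.zero_mem _
    · -- 6,3
      have : x * y = 0 := hEmul x (by simpa [hGdef] using hx) y
      rw [this]; exact Submodule.zero_mem _
    · -- 6,4
      have : x * y = 0 := hEmul x (by simpa [hGdef] using hx) y
      rw [this]; exact Submodule.zero_mem _
    · -- 6,6
      have : x * y = 0 := hEmul x (by simpa [hGdef] using hx) y
      rw [this]; exact Submodule.zero_mem _
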